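/- Let C be a composition algebra over a field k, M ⊆ C the set of elements of norm 1, and g: M → M a bijection preserving multiplication (a multiplicative automorphism of the loop M). If x, y ∈ M satisfy x + y ∈ M, then g(x + y) = g(x) + g(y). -/
import Mathlib


/-- The bilinear (polar) form associated to a quadratic form `N`. -/
def polarForm {k C : Type*} [Field k] [AddCommGroup C] (N : C → k) (x y : C) : k :=
  N (x + y) - N x - N y

/-- A multiplicative automorphism of the norm-one loop of a composition algebra is
additive whenever the sum of two norm-one elements again has norm one. -/
theorem aut_additive (k C : Type*) [Field k] [NonAssocRing C] [Module k C]
    [SMulCommClass k C C] [IsScalarTower k C C] [FiniteDimensional k C]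
    (N : C → k)
    (hN_smul : ∀ (a : k) (x : C), N (a • x) = a ^ 2 * N x)
    (hpolar_add : ∀ x y z : C, polarForm N (x + y) z = polarForm N x z + polarForm N y z)
    (hpolar_smul : ∀ (a : k) (x y : C), polarForm N (a • x) y = a * polarForm N x y)
    (hN_nondeg : ∀ x : C, (∀ y : C, polarForm N x y = 0) → x = 0)
    (hN_mul : ∀ x y : C, N (x * y) = N x * N y)
    (g : C → C)
    (hg_bij : Set.BijOn g {x : C | N x = 1} {x : C | N x = 1})
    (hg_mul : ∀ x y : C, N x = 1 → N y = 1 → g (x * y) = g x * g y)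
    (x y : C) (hx : N x = 1) (hy : N y = 1) (hxy : N (x + y) = 1) :
    g (x + y) = g x + g y := by
  have hBdef : ∀ a b : C, polarForm N a b = N (a + b) - N a - N b := fun _ _ => rfl
  have hBsymm : ∀ a b : C, polarForm N a b = polarForm N b a := by
    intro a b; rw [hBdef, hBdef, add_comm]; ring
  have hBadd_r : ∀ a b c : C, polarForm N a (b + c) = polarForm N a b + polarForm N a c := by
    intro a b c; rw [hBsymm, hpolar_add, hBsymm b, hBsymm c]
  have hBsmul_r : ∀ (t : k) (a b : C), polarForm N a (t • b) = t * polarForm N a b := by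
    intro t a b; rw [hBsymm, hpolar_smul, hBsymm]
  have hN1 : N 1 = 1 := by
    have h := hN_mul x 1
    rw [mul_one, hx] at h
    linear_combination -h
  have hBsub : ∀ a b c : C, polarForm N (a - b) c = polarForm N a c - polarForm N b c := by
    intro a b c
    have h := hpolar_add (a - b) b c
    rw [sub_add_cancel] at h
    linear_combination -h
  have hBext : ∀ a b : C, (∀ z : C, polarForm N a z = polarForm N b z) → a = b := by
    intro a b h
    have h0 : a - b = 0 := hN_nondeg _ (fun z => by rw [hBsub, h, sub_self])
    exact sub_eq_zero.mp h0
  have hN0 : N (0 : C) = 0 := by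
    have h := hN_smul 0 0; simpa using h
  have h1C : (1 : C) ≠ 0 := by
    intro h
    have hx0 : x = 0 := by rw [← mul_one x, h, mul_zero]
    rw [hx0, hN0] at hx
    exact one_ne_zero hx.symm
  have hsmul1 : ∀ t : k, t • (1 : C) = 0 → t = 0 := by
    intro t h
    by_contra ht
    apply h1C
    calc (1:C) = t⁻¹ • (t • (1:C)) := by rw [smul_smul, inv_mul_cancel₀ ht, one_smul]
    _ = 0 := by rw [h, smul_zero]
  -- linearizations of multiplicativity
  have hL1 : ∀ a b c : C, polarForm N (a*b) (a*c) = N a * polarForm N b c := by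
    intro a b c
    rw [hBdef, hBdef, ← mul_add, hN_mul, hN_mul, hN_mul]; ring
  have hL2 : ∀ a b c : C, polarForm N (a*c) (b*c) = polarForm N a b * N c := by
    intro a b c
    rw [hBdef, hBdef, ← add_mul, hN_mul, hN_mul, hN_mul]; ring
  have hL3 : ∀ a b w z : C, polarForm N (a*b) (w*z) + polarForm N (w*b) (a*z)
      = polarForm N a w * polarForm N b z := by
    intro a b w z
    have h := hL1 (a + w) b z
    rw [add_mul, add_mul, hpolar_add, hBadd_r, hBadd_r, hL1, hL1] at h
    have hNaw : N (a + w) = polarForm N a w + N a + N w := by rw [hBdef]; ring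
    rw [hNaw] at h
    linear_combination h
  have hAdjR : ∀ a b w : C, polarForm N (a*b) w
      = polarForm N b 1 * polarForm N a w - polarForm N (w*b) a := by
    intro a b w
    have h := hL3 a b w 1
    rw [mul_one] at h
    have h2 : polarForm N (w * b) (a * 1) = polarForm N (w*b) a := by rw [mul_one]
    rw [h2] at h
    linear_combination h
  -- Kirmse identity : (b*a) * conj a = N a • b
  have hKR : ∀ a b : C, (b * a) * (polarForm N a 1 • (1:C) - a) = N a • b := by
    intro a b
    apply hBext
    intro z
    have e1 : (b*a) * (polarForm N a 1 • (1:C) - a)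
        = polarForm N a 1 • (b*a) - (b*a)*a := by
      rw [mul_sub, mul_smul_comm, mul_one]
    rw [e1, hBsub, hpolar_smul, hpolar_smul]
    rw [hAdjR (b*a) a z, hL2 z b a, hBsymm z b]
    ring
  -- quadratic relation
  have hSq : ∀ a : C, a * a = polarForm N a 1 • a - N a • (1:C) := by
    intro a
    have h := hKR a 1
    rw [one_mul, mul_sub, mul_smul_comm, mul_one] at h
    rw [← h]; abel
  -- conjugate has same norm
  have hNconj : ∀ a : C, N (polarForm N a 1 • (1:C) - a) = N a := by
    intro a
    have ha : (-a : C) = (-1 : k) • a := by rw [neg_one_smul]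
    have h := hBdef (polarForm N a 1 • (1:C)) (-a)
    have h1 : N (polarForm N a 1 • (1:C)) = polarForm N a 1 ^ 2 := by
      rw [hN_smul, hN1, mul_one]
    have h2 : N (-a) = N a := by rw [ha, hN_smul]; ring_nf
    have h3 : polarForm N (polarForm N a 1 • (1:C)) (-a)
        = - (polarForm N a 1 * polarForm N a 1) := by
      rw [hpolar_smul, ha, hBsmul_r, hBsymm 1 a]; ring
    have h4 : polarForm N a 1 • (1:C) + -a = polarForm N a 1 • (1:C) - a := by
      rw [sub_eq_add_neg]
    rw [h4, h1, h2, h3] at h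
    linear_combination -h
  have hB11 : polarForm N (1:C) 1 = 2 := by
    have h12 : (1:C) + 1 = (2:k) • 1 := (two_smul k (1:C)).symm
    rw [hBdef, h12, hN_smul, hN1]
    norm_num
  -- g fixes 1
  have hg11 : g 1 = g 1 * g 1 := by
    have h := hg_mul 1 1 hN1 hN1
    rw [one_mul] at h; exact h
  have hNg1 : N (g 1) = 1 := hg_bij.mapsTo (show (1:C) ∈ {x : C | N x = 1} from hN1)
  have hg1 : g 1 = 1 := by
    have hsq := hSq (g 1)
    rw [← hg11, hNg1, one_smul] at hsq
    -- hsq : g 1 = τ • g 1 - 1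
    have h1 : (polarForm N (g 1) 1 - 1) • g 1 = 1 := by
      rw [sub_smul, one_smul]
      nth_rewrite 3 [hsq]
      abel
    have hτ1 : polarForm N (g 1) 1 - 1 ≠ 0 := by
      intro h0
      rw [h0, zero_smul] at h1
      exact h1C h1.symm
    have hg1c : g 1 = (polarForm N (g 1) 1 - 1)⁻¹ • (1:C) := by
      calc g 1 = (polarForm N (g 1) 1 - 1)⁻¹ • ((polarForm N (g 1) 1 - 1) • g 1) := by
            rw [smul_smul, inv_mul_cancel₀ hτ1, one_smul]
      _ = (polarForm N (g 1) 1 - 1)⁻¹ • (1:C) := by rw [h1]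
    have hc2 : ((polarForm N (g 1) 1 - 1)⁻¹)^2 = 1 := by
      rw [hg1c, hN_smul, hN1, mul_one] at hNg1
      exact hNg1
    have hGG : g 1 * g 1 = 1 := by
      rw [hg1c, smul_mul_assoc, mul_smul_comm, one_mul, smul_smul, ← pow_two, hc2, one_smul]
    rw [hg11, hGG]
  have hN1C : N (-1 : C) = 1 := by
    have h : (-1 : C) = (-1 : k) • 1 := by rw [neg_one_smul]
    rw [h, hN_smul, hN1]; ring_nf
  -- g fixes -1
  have hgneg1 : g (-1 : C) = -1 := by
    by_cases h2 : (2:k) = 0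
    · have h0 : (1:C) + 1 = 0 := by rw [← two_smul k (1:C), h2, zero_smul]
      have h11 : (-1 : C) = 1 := neg_eq_of_add_eq_zero_left h0
      rw [h11, hg1]
    · have hNe : N (g (-1:C)) = 1 := hg_bij.mapsTo (show (-1:C) ∈ {x : C | N x = 1} from hN1C)
      have hee : g (-1:C) * g (-1:C) = 1 := by
        have h := hg_mul (-1) (-1) hN1C hN1C
        rw [neg_one_mul, neg_neg, hg1] at h
        exact h.symm
      have hsq := hSq (g (-1:C))
      rw [hee, hNe, one_smul] at hsq
      -- hsq : 1 = τ • e - 1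
      rw [eq_sub_iff_add_eq] at hsq
      -- hsq : 1 + 1 = τ • e
      have hτe : polarForm N (g (-1:C)) 1 • g (-1:C) = (2:k) • (1:C) := by
        rw [two_smul]; exact hsq.symm
      have hτ0 : polarForm N (g (-1:C)) 1 ≠ 0 := by
        intro h0
        rw [h0, zero_smul] at hτe
        exact h2 (hsmul1 2 hτe.symm)
      have he : g (-1:C) = ((polarForm N (g (-1:C)) 1)⁻¹ * 2) • (1:C) := by
        calc g (-1:C) = (polarForm N (g (-1:C)) 1)⁻¹ • (polarForm N (g (-1:C)) 1 • g (-1:C)) := by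
              rw [smul_smul, inv_mul_cancel₀ hτ0, one_smul]
        _ = (polarForm N (g (-1:C)) 1)⁻¹ • ((2:k) • (1:C)) := by rw [hτe]
        _ = ((polarForm N (g (-1:C)) 1)⁻¹ * 2) • (1:C) := by rw [smul_smul]
      have hc2 : ((polarForm N (g (-1:C)) 1)⁻¹ * 2)^2 = 1 := by
        rw [he, hN_smul, hN1, mul_one] at hNe
        exact hNe
      have hcc : ((polarForm N (g (-1:C)) 1)⁻¹ * 2) = 1 ∨
          ((polarForm N (g (-1:C)) 1)⁻¹ * 2) = -1 := by
        have hfac : (((polarForm N (g (-1:C)) 1)⁻¹ * 2) - 1) *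
            (((polarForm N (g (-1:C)) 1)⁻¹ * 2) + 1) = 0 := by
          linear_combination hc2
        rcases mul_eq_zero.mp hfac with h | h
        · left; linear_combination h
        · right; linear_combination h
      rcases hcc with hc | hc
      · exfalso
        rw [hc, one_smul] at he
        have hneg : (-1:C) = 1 := by
          apply hg_bij.injOn (show (-1:C) ∈ {x : C | N x = 1} from hN1C)
            (show (1:C) ∈ {x : C | N x = 1} from hN1)
          rw [he, hg1]
        have h0 : (1:C) + 1 = 0 := by
          nth_rewrite 2 [← hneg]
          rw [add_neg_cancel]
        have : (2:k) • (1:C) = 0 := by rw [two_smul]; exact h0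
        exact h2 (hsmul1 2 this)
      · rw [he, hc, neg_one_smul]
  have hgneg : ∀ z : C, N z = 1 → g (-z) = - g z := by
    intro z hz
    have h := hg_mul (-1) z hN1C hz
    rw [neg_one_mul] at h
    rw [h, hgneg1, neg_one_mul]
  -- key lemma: g (u + 1) = g u + 1 when u² = -u-1
  have hsum1 : ∀ u : C, N u = 1 → u ≠ 1 → u * u = -u - 1 → g (u + 1) = g u + 1 := by
    intro u hNu hune huu
    have hNuu : N (u*u) = 1 := by rw [hN_mul, hNu, mul_one]
    have huuu : (u*u)*u = 1 := by
      rw [huu, sub_mul, one_mul, neg_mul, huu]; abel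
    have hNG : N (g u) = 1 := hg_bij.mapsTo (show u ∈ {x : C | N x = 1} from hNu)
    have hgUU : g (u*u) = g u * g u := hg_mul u u hNu hNu
    have hGGG : (g u * g u) * g u = 1 := by
      have h := hg_mul (u*u) u hNuu hNu
      rw [huuu, hg1, hgUU] at h
      exact h.symm
    have hGsq : g u * g u = polarForm N (g u) 1 • g u - 1 := by
      have h := hSq (g u); rw [hNG, one_smul] at h; exact h
    have hτ : polarForm N (g u) 1 = -1 := by
      by_contra hτ
      have h1 : (polarForm N (g u) 1 * polarForm N (g u) 1 - 1) • g u
          = (1 + polarForm N (g u) 1) • (1:C) := by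
        have h := hGGG
        rw [hGsq, sub_mul, one_mul, smul_mul_assoc, hGsq, smul_sub, smul_smul] at h
        -- h : (τ*τ)•gu − τ•1 − gu = 1
        rw [sub_smul, one_smul, add_smul, one_smul]
        calc (polarForm N (g u) 1 * polarForm N (g u) 1) • g u - g u
            = ((polarForm N (g u) 1 * polarForm N (g u) 1) • g u
                - polarForm N (g u) 1 • (1:C) - g u) + polarForm N (g u) 1 • (1:C) := by abel
        _ = 1 + polarForm N (g u) 1 • (1:C) := by rw [h]
      have hττ : polarForm N (g u) 1 * polarForm N (g u) 1 - 1 ≠ 0 := by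
        intro h0
        rw [h0, zero_smul] at h1
        have h00 : (1 + polarForm N (g u) 1) = 0 := hsmul1 _ h1.symm
        apply hτ; linear_combination h00
      have hGc : g u = ((polarForm N (g u) 1 * polarForm N (g u) 1 - 1)⁻¹
          * (1 + polarForm N (g u) 1)) • (1:C) := by
        calc g u = (polarForm N (g u) 1 * polarForm N (g u) 1 - 1)⁻¹
              • ((polarForm N (g u) 1 * polarForm N (g u) 1 - 1) • g u) := by
              rw [smul_smul, inv_mul_cancel₀ hττ, one_smul]
        _ = (polarForm N (g u) 1 * polarForm N (g u) 1 - 1)⁻¹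
              • ((1 + polarForm N (g u) 1) • (1:C)) := by rw [h1]
        _ = _ := by rw [smul_smul]
      have hc2 : ((polarForm N (g u) 1 * polarForm N (g u) 1 - 1)⁻¹
          * (1 + polarForm N (g u) 1))^2 = 1 := by
        have h := hNG
        rw [hGc, hN_smul, hN1, mul_one] at h
        exact h
      have hGG1 : g u * g u = 1 := by
        rw [hGc, smul_mul_assoc, mul_smul_comm, one_mul, smul_smul, ← pow_two, hc2, one_smul]
      have hGu1 : g u = 1 := by rw [← hGGG, hGG1, one_mul]
      have : u = 1 := hg_bij.injOn (show u ∈ {x : C | N x = 1} from hNu)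
        (show (1:C) ∈ {x : C | N x = 1} from hN1) (by rw [hGu1, hg1])
      exact hune this
    have hGG2 : g u * g u = -(g u) - 1 := by rw [hGsq, hτ, neg_one_smul]
    have hu1 : u + 1 = -(u*u) := by rw [huu]; abel
    calc g (u+1) = g (-(u*u)) := by rw [hu1]
    _ = -(g (u*u)) := hgneg _ hNuu
    _ = -(-(g u) - 1) := by rw [hgUU, hGG2]
    _ = g u + 1 := by abel
  -- main case split
  by_cases hxy' : x = y
  · subst hxy'
    have h4 : (2:k)^2 = 1 := by
      have h := hN_smul 2 x
      rw [hx, mul_one, two_smul] at h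
      rw [← h]; exact hxy
    have h3k : (3:k) = 0 := by linear_combination h4
    have h3smul : ∀ c : C, (3:k) • c = c + c + c := by
      intro c
      rw [show (3:k) = 1 + 1 + 1 by norm_num, add_smul, add_smul, one_smul]
    have hxx : x + x = -x := by
      have h0 : x + x + x = 0 := by rw [← h3smul, h3k, zero_smul]
      exact eq_neg_of_add_eq_zero_left h0
    have hgx0 : g x + g x + g x = 0 := by rw [← h3smul, h3k, zero_smul]
    rw [hxx, hgneg x hx]
    exact (eq_neg_of_add_eq_zero_left hgx0).symm
  · -- x ≠ y
    set d := polarForm N y 1 • (1:C) - y with hd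
    have hNd : N d = 1 := by rw [hd, hNconj, hy]
    have hNu : N (x * d) = 1 := by rw [hN_mul, hx, hNd, mul_one]
    have hBd1 : polarForm N d 1 = polarForm N y 1 := by
      rw [hd, hBsub, hpolar_smul, hB11]; ring
    have hdd : polarForm N d 1 • (1:C) - d = y := by
      rw [hBd1, hd]; abel
    have huy : (x * d) * y = x := by
      have h := hKR d x
      rw [hdd, hNd, one_smul] at h
      exact h
    have hBxy : polarForm N x y = -1 := by rw [hBdef, hxy, hx, hy]; ring
    have hBu1 : polarForm N (x * d) 1 = -1 := by
      have h := hAdjR x d 1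
      rw [one_mul] at h
      have hBdx : polarForm N d x = polarForm N y 1 * polarForm N x 1 - polarForm N x y := by
        rw [hd, hBsub, hpolar_smul, hBsymm 1 x, hBsymm y x]
      rw [hBdx, hBd1, hBxy] at h
      rw [h]; ring
    have huu : (x * d) * (x * d) = -(x * d) - 1 := by
      have h := hSq (x * d)
      rw [hBu1, hNu, one_smul, neg_one_smul] at h
      exact h
    have hune : x * d ≠ 1 := by
      intro h
      apply hxy'
      rw [← huy, h, one_mul]
    have hNu1 : N (x * d + 1) = 1 := by
      have h := hBdef (x * d) 1
      rw [hBu1, hNu, hN1] at h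
      linear_combination -h
    have hvy : (x * d + 1) * y = x + y := by rw [add_mul, one_mul, huy]
    have hgu1 := hsum1 (x * d) hNu hune huu
    calc g (x + y) = g ((x * d + 1) * y) := by rw [hvy]
    _ = g (x * d + 1) * g y := hg_mul _ y hNu1 hy
    _ = (g (x * d) + 1) * g y := by rw [hgu1]
    _ = g (x * d) * g y + g y := by rw [add_mul, one_mul]
    _ = g ((x * d) * y) + g y := by rw [hg_mul (x * d) y hNu hy]
    _ = g x + g y := by rw [huy]
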